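/- Let N ≥ 1 and let M, N' ∈ ℝ^{N×N} be real symmetric matrices. Then for every k = 1, …, N, |λ_k(M) − λ_k(N')| ≤ ℓ(M − N') · ‖M − N'‖_max, where ℓ(M − N') is the maximum number of nonzero entries in any single row of M − N'. -/

import Mathlib

open Matrix

/-- The `k`-th smallest eigenvalue (counted with multiplicity) of a real
symmetric (Hermitian) matrix, obtained by sorting the eigenvalues. -/
noncomputable def sortedEig {N : ℕ} {A : Matrix (Fin N) (Fin N) ℝ}
    (hA : A.IsHermitian) : Fin N → ℝ :=
  hA.eigenvalues ∘ Tuple.sort hA.eigenvalues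

/-- The max norm `‖M‖_max = max_{i,j} |M_{ij}|`. -/
noncomputable def maxNorm {N : ℕ} (M : Matrix (Fin N) (Fin N) ℝ) : ℝ :=
  ⨆ i : Fin N, ⨆ j : Fin N, |M i j|

/- `ℓ(M)`: the maximum number of nonzero entries in any single row of `M`. -/
open Classical in
noncomputable def rowNnz {N : ℕ} (M : Matrix (Fin N) (Fin N) ℝ) : ℕ :=
  Finset.univ.sup fun i => (Finset.univ.filter fun j => M i j ≠ 0).card

section aux

open RealInnerProductSpace

variable {N : ℕ}

lemma abs_le_maxNorm (M : Matrix (Fin N) (Fin N) ℝ) (i j : Fin N) :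
    |M i j| ≤ maxNorm M := by
  have h1 : |M i j| ≤ ⨆ j' : Fin N, |M i j'| :=
    le_ciSup (f := fun j' => |M i j'|) (Set.Finite.bddAbove (Set.finite_range _)) j
  exact h1.trans (le_ciSup (f := fun i' => ⨆ j' : Fin N, |M i' j'|)
    (Set.Finite.bddAbove (Set.finite_range _)) i)

lemma maxNorm_nonneg (hN : 1 ≤ N) (M : Matrix (Fin N) (Fin N) ℝ) : 0 ≤ maxNorm M :=
  (abs_nonneg _).trans (abs_le_maxNorm M ⟨0, hN⟩ ⟨0, hN⟩)

lemma inner_toEuclideanLin (A : Matrix (Fin N) (Fin N) ℝ) (x : EuclideanSpace ℝ (Fin N)) :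
    ⟪x, Matrix.toEuclideanLin A x⟫ = ∑ i, ∑ j, x i * (A i j * x j) := by
  rw [Matrix.toEuclideanLin_apply]
  simp [PiLp.inner_apply, Matrix.mulVec, dotProduct, Finset.mul_sum]
  exact Finset.sum_congr rfl fun i _ => by
    rw [Finset.sum_mul]; exact Finset.sum_congr rfl fun j _ => by ring

lemma toEuclideanLin_eigen {A : Matrix (Fin N) (Fin N) ℝ} (hA : A.IsHermitian) (i : Fin N) :
    Matrix.toEuclideanLin A (hA.eigenvectorBasis i) =
      hA.eigenvalues i • hA.eigenvectorBasis i := by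
  have h := hA.mulVec_eigenvectorBasis i
  rw [Matrix.toEuclideanLin_apply]
  rw [h]
  rfl

lemma inner_basis_eq_zero {A : Matrix (Fin N) (Fin N) ℝ} (hA : A.IsHermitian)
    {ι : Type} (g : ι → Fin N) {x : EuclideanSpace ℝ (Fin N)}
    (hx : x ∈ Submodule.span ℝ (Set.range fun j => hA.eigenvectorBasis (g j)))
    (i : Fin N) (hi : ∀ j, g j ≠ i) : ⟪hA.eigenvectorBasis i, x⟫ = 0 := by
  set b := hA.eigenvectorBasis
  have hsub : Submodule.span ℝ (Set.range fun j => b (g j)) ≤ (ℝ ∙ (b i))ᗮ := by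
    rw [Submodule.span_le]
    rintro _ ⟨j, rfl⟩
    rw [SetLike.mem_coe, Submodule.mem_orthogonal_singleton_iff_inner_right]
    exact b.orthonormal.2 (fun h => hi j h.symm)
  exact Submodule.mem_orthogonal_singleton_iff_inner_right.1 (hsub hx)

lemma quad_lower {A : Matrix (Fin N) (Fin N) ℝ} (hA : A.IsHermitian)
    {ι : Type} (g : ι → Fin N) (c : ℝ) (hg : ∀ j, c ≤ hA.eigenvalues (g j))
    {x : EuclideanSpace ℝ (Fin N)}
    (hx : x ∈ Submodule.span ℝ (Set.range fun j => hA.eigenvectorBasis (g j))) :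
    c * ⟪x, x⟫ ≤ ⟪x, Matrix.toEuclideanLin A x⟫ := by
  classical
  set b := hA.eigenvectorBasis with hb
  have hTb : ∀ i, ⟪b i, Matrix.toEuclideanLin A x⟫ = hA.eigenvalues i * ⟪b i, x⟫ := by
    intro i
    rw [← (Matrix.isHermitian_iff_isSymmetric.1 hA) (b i) x, toEuclideanLin_eigen hA i,
      real_inner_smul_left]
  calc c * ⟪x, x⟫ = ∑ i, c * (⟪b i, x⟫ * ⟪b i, x⟫) := by
        rw [← b.sum_inner_mul_inner x x, Finset.mul_sum]
        exact Finset.sum_congr rfl fun i _ => by rw [real_inner_comm x (b i)]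
    _ ≤ ∑ i, hA.eigenvalues i * (⟪b i, x⟫ * ⟪b i, x⟫) := by
        apply Finset.sum_le_sum
        intro i _
        by_cases h : ∃ j, g j = i
        · obtain ⟨j, rfl⟩ := h
          exact mul_le_mul_of_nonneg_right (hg j) (mul_self_nonneg _)
        · push_neg at h
          rw [inner_basis_eq_zero hA g hx i h]
          simp
    _ = ⟪x, Matrix.toEuclideanLin A x⟫ := by
        rw [← b.sum_inner_mul_inner x (Matrix.toEuclideanLin A x)]
        exact Finset.sum_congr rfl fun i _ => by
          rw [hTb i, real_inner_comm x (b i)]; ring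

lemma quad_upper {A : Matrix (Fin N) (Fin N) ℝ} (hA : A.IsHermitian)
    {ι : Type} (g : ι → Fin N) (c : ℝ) (hg : ∀ j, hA.eigenvalues (g j) ≤ c)
    {x : EuclideanSpace ℝ (Fin N)}
    (hx : x ∈ Submodule.span ℝ (Set.range fun j => hA.eigenvectorBasis (g j))) :
    ⟪x, Matrix.toEuclideanLin A x⟫ ≤ c * ⟪x, x⟫ := by
  classical
  set b := hA.eigenvectorBasis with hb
  have hTb : ∀ i, ⟪b i, Matrix.toEuclideanLin A x⟫ = hA.eigenvalues i * ⟪b i, x⟫ := by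
    intro i
    rw [← (Matrix.isHermitian_iff_isSymmetric.1 hA) (b i) x, toEuclideanLin_eigen hA i,
      real_inner_smul_left]
  calc ⟪x, Matrix.toEuclideanLin A x⟫
      = ∑ i, hA.eigenvalues i * (⟪b i, x⟫ * ⟪b i, x⟫) := by
        rw [← b.sum_inner_mul_inner x (Matrix.toEuclideanLin A x)]
        exact Finset.sum_congr rfl fun i _ => by
          rw [hTb i, real_inner_comm x (b i)]; ring
    _ ≤ ∑ i, c * (⟪b i, x⟫ * ⟪b i, x⟫) := by
        apply Finset.sum_le_sum
        intro i _
        by_cases h : ∃ j, g j = i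
        · obtain ⟨j, rfl⟩ := h
          exact mul_le_mul_of_nonneg_right (hg j) (mul_self_nonneg _)
        · push_neg at h
          rw [inner_basis_eq_zero hA g hx i h]
          simp
    _ = c * ⟪x, x⟫ := by
        rw [← b.sum_inner_mul_inner x x, Finset.mul_sum]
        exact Finset.sum_congr rfl fun i _ => by rw [real_inner_comm x (b i)]

lemma exists_mem_inf (V W : Submodule ℝ (EuclideanSpace ℝ (Fin N)))
    (h : N < Module.finrank ℝ V + Module.finrank ℝ W) :
    ∃ x : EuclideanSpace ℝ (Fin N), x ∈ V ⊓ W ∧ x ≠ 0 := by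
  have h1 := Submodule.finrank_sup_add_finrank_inf_eq V W
  have h2 : Module.finrank ℝ ↥(V ⊔ W) ≤ N := by
    have := Submodule.finrank_le (V ⊔ W)
    simpa [finrank_euclideanSpace] using this
  have h3 : 0 < Module.finrank ℝ ↥(V ⊓ W) := by omega
  have : Nontrivial ↥(V ⊓ W) := Module.nontrivial_of_finrank_pos h3
  obtain ⟨y, hy⟩ := exists_ne (0 : ↥(V ⊓ W))
  exact ⟨(y : EuclideanSpace ℝ (Fin N)), y.2, fun h0 => hy (Subtype.ext h0)⟩

lemma weyl_le {A B : Matrix (Fin N) (Fin N) ℝ}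
    (hA : A.IsHermitian) (hB : B.IsHermitian) (k : Fin N) (c : ℝ)
    (hc : ∀ x : EuclideanSpace ℝ (Fin N),
      ⟪x, Matrix.toEuclideanLin A x⟫ - ⟪x, Matrix.toEuclideanLin B x⟫ ≤ c * ⟪x, x⟫) :
    sortedEig hA k ≤ sortedEig hB k + c := by
  classical
  set σA := Tuple.sort hA.eigenvalues with hσA
  set σB := Tuple.sort hB.eigenvalues with hσB
  set gA : Set.Ici k → Fin N := fun j => σA j.1
  set gB : Set.Iic k → Fin N := fun j => σB j.1
  set fA : Set.Ici k → EuclideanSpace ℝ (Fin N) := fun j => hA.eigenvectorBasis (gA j)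
  set fB : Set.Iic k → EuclideanSpace ℝ (Fin N) := fun j => hB.eigenvectorBasis (gB j)
  have honA : Orthonormal ℝ fA :=
    hA.eigenvectorBasis.orthonormal.comp _ (σA.injective.comp Subtype.val_injective)
  have honB : Orthonormal ℝ fB :=
    hB.eigenvectorBasis.orthonormal.comp _ (σB.injective.comp Subtype.val_injective)
  set V := Submodule.span ℝ (Set.range fA)
  set W := Submodule.span ℝ (Set.range fB)
  have hrV : Module.finrank ℝ V = N - (k : ℕ) := by
    rw [finrank_span_eq_card honA.linearIndependent, ← Set.toFinset_card, Set.toFinset_Ici, Fin.card_Ici]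
  have hrW : Module.finrank ℝ W = (k : ℕ) + 1 := by
    rw [finrank_span_eq_card honB.linearIndependent, ← Set.toFinset_card, Set.toFinset_Iic, Fin.card_Iic]
  obtain ⟨x, hxVW, hx0⟩ : ∃ x : EuclideanSpace ℝ (Fin N), x ∈ V ⊓ W ∧ x ≠ 0 := by
    apply exists_mem_inf
    have hk := k.isLt
    omega
  have hxV : x ∈ V := hxVW.1
  have hxW : x ∈ W := hxVW.2
  have hlow : sortedEig hA k * ⟪x, x⟫ ≤ ⟪x, Matrix.toEuclideanLin A x⟫ := by
    apply quad_lower hA gA _ _ hxV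
    intro j
    exact Tuple.monotone_sort hA.eigenvalues j.2
  have hup : ⟪x, Matrix.toEuclideanLin B x⟫ ≤ sortedEig hB k * ⟪x, x⟫ := by
    apply quad_upper hB gB _ _ hxW
    intro j
    exact Tuple.monotone_sort hB.eigenvalues j.2
  have hpos : (0:ℝ) < ⟪x, x⟫ :=
    lt_of_le_of_ne real_inner_self_nonneg (fun h => hx0 (inner_self_eq_zero.1 h.symm))
  have := hc x
  have key : sortedEig hA k * ⟪x, x⟫ ≤ (sortedEig hB k + c) * ⟪x, x⟫ := by nlinarith
  exact le_of_mul_le_mul_right (by simpa [mul_comm] using key) hpos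

lemma rayleigh_bound (hN : 1 ≤ N) (E : Matrix (Fin N) (Fin N) ℝ) (hE : E.IsHermitian)
    (x : EuclideanSpace ℝ (Fin N)) :
    |⟪x, Matrix.toEuclideanLin E x⟫| ≤ (rowNnz E : ℝ) * maxNorm E * ⟪x, x⟫ := by
  classical
  set B := maxNorm E with hBdef
  have hB0 : 0 ≤ B := maxNorm_nonneg hN E
  set ind : Fin N → Fin N → ℝ := fun i j => if E i j ≠ 0 then 1 else 0 with hind
  have hEsym : ∀ i j, E j i = E i j := fun i j => by
    have := hE.apply i j
    simpa using this
  have hsym : ∀ i j, ind i j = ind j i := by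
    intro i j
    simp only [hind, hEsym i j]
  set c : Fin N → ℝ := fun i => ((Finset.univ.filter fun j => E i j ≠ 0).card : ℝ) with hc
  have hrow : ∀ i, ∑ j, ind i j = c i := by
    intro i
    simp only [hind, hc]
    rw [Finset.sum_boole]
  have hcL : ∀ i, c i ≤ (rowNnz E : ℝ) := by
    intro i
    have h : (Finset.univ.filter fun j => E i j ≠ 0).card ≤ rowNnz E := by
      unfold rowNnz
      convert Finset.le_sup (f := fun i => (Finset.univ.filter fun j => E i j ≠ 0).card)
        (Finset.mem_univ i) using 2
    simp only [hc]
    exact_mod_cast h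
  have hterm : ∀ i j, |x i * (E i j * x j)| ≤ ind i j * (B * ((x i ^ 2 + x j ^ 2) / 2)) := by
    intro i j
    by_cases h : E i j = 0
    · simp [h, hind]
    · have h1 : |E i j| ≤ B := abs_le_maxNorm E i j
      have h2 : |x i| * |x j| ≤ (x i ^ 2 + x j ^ 2) / 2 := by
        nlinarith [sq_nonneg (|x i| - |x j|), sq_abs (x i), sq_abs (x j)]
      have h3 : |x i * (E i j * x j)| = |E i j| * (|x i| * |x j|) := by
        rw [abs_mul, abs_mul]; ring
      have h4 : ind i j = 1 := by simp [hind, h]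
      rw [h3, h4, one_mul]
      exact mul_le_mul h1 h2 (by positivity) hB0
  have e1 : ∑ i, ∑ j, ind i j * x i ^ 2 = ∑ i, c i * x i ^ 2 := by
    refine Finset.sum_congr rfl fun i _ => ?_
    rw [← Finset.sum_mul, hrow]
  have e2 : ∑ i, ∑ j, ind i j * x j ^ 2 = ∑ j, c j * x j ^ 2 := by
    rw [Finset.sum_comm]
    refine Finset.sum_congr rfl fun j _ => ?_
    rw [← Finset.sum_mul]
    congr 1
    rw [show ∑ i, ind i j = ∑ i, ind j i from Finset.sum_congr rfl (fun i _ => hsym i j), hrow]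
  have e3 : ∑ i, ∑ j, ind i j * (B * ((x i ^ 2 + x j ^ 2) / 2))
      = (B / 2) * (∑ i, ∑ j, ind i j * x i ^ 2) + (B / 2) * (∑ i, ∑ j, ind i j * x j ^ 2) := by
    rw [Finset.mul_sum, Finset.mul_sum, ← Finset.sum_add_distrib]
    refine Finset.sum_congr rfl fun i _ => ?_
    rw [Finset.mul_sum, Finset.mul_sum, ← Finset.sum_add_distrib]
    exact Finset.sum_congr rfl fun j _ => by ring
  have e4 : ∑ i, c i * x i ^ 2 ≤ (rowNnz E : ℝ) * ∑ i, x i ^ 2 := by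
    rw [Finset.mul_sum]
    exact Finset.sum_le_sum fun i _ => mul_le_mul_of_nonneg_right (hcL i) (sq_nonneg _)
  have e5 : ⟪x, x⟫ = ∑ i, x i ^ 2 := by
    simp only [PiLp.inner_apply, RCLike.inner_apply, conj_trivial, pow_two]
  calc |⟪x, Matrix.toEuclideanLin E x⟫| ≤ ∑ i, ∑ j, |x i * (E i j * x j)| := by
        rw [inner_toEuclideanLin]
        exact (Finset.abs_sum_le_sum_abs _ _).trans
          (Finset.sum_le_sum fun i _ => Finset.abs_sum_le_sum_abs _ _)
    _ ≤ ∑ i, ∑ j, ind i j * (B * ((x i ^ 2 + x j ^ 2) / 2)) :=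
        Finset.sum_le_sum fun i _ => Finset.sum_le_sum fun j _ => hterm i j
    _ = (B / 2) * (∑ i, c i * x i ^ 2) + (B / 2) * (∑ j, c j * x j ^ 2) := by
        rw [e3, e1, e2]
    _ = B * (∑ i, c i * x i ^ 2) := by ring
    _ ≤ B * ((rowNnz E : ℝ) * ∑ i, x i ^ 2) := mul_le_mul_of_nonneg_left e4 hB0
    _ = (rowNnz E : ℝ) * maxNorm E * ⟪x, x⟫ := by rw [e5, hBdef]; ring

end aux

open RealInnerProductSpace in
/-- For real symmetric matrices `M`, `N'`, the `k`-th smallest eigenvalues satisfy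
`|λ_k(M) − λ_k(N')| ≤ ℓ(M − N') · ‖M − N'‖_max`. -/
theorem stmt1 {N : ℕ} (hN : 1 ≤ N) (M N' : Matrix (Fin N) (Fin N) ℝ)
    (hM : M.IsHermitian) (hN' : N'.IsHermitian) (k : Fin N) :
    |sortedEig hM k - sortedEig hN' k| ≤ (rowNnz (M - N') : ℝ) * maxNorm (M - N') := by
  have hEH : (M - N').IsHermitian := hM.sub hN'
  have hray := rayleigh_bound hN (M - N') hEH
  have hdiff : ∀ x : EuclideanSpace ℝ (Fin N),
      ⟪x, Matrix.toEuclideanLin M x⟫ - ⟪x, Matrix.toEuclideanLin N' x⟫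
        = ⟪x, Matrix.toEuclideanLin (M - N') x⟫ := by
    intro x
    rw [map_sub, LinearMap.sub_apply, inner_sub_right]
  set c := (rowNnz (M - N') : ℝ) * maxNorm (M - N') with hcdef
  have h1 : sortedEig hM k ≤ sortedEig hN' k + c := by
    apply weyl_le hM hN' k c
    intro x
    rw [hdiff x]
    exact (abs_le.1 (hray x)).2
  have h2 : sortedEig hN' k ≤ sortedEig hM k + c := by
    apply weyl_le hN' hM k c
    intro x
    have h := (abs_le.1 (hray x)).1
    have h' := hdiff x
    linarith
  rw [abs_sub_le_iff]
  constructor <;> linarith
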